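/- With the data of a relational reachability instance (MDP M, m ≥ n ≥ 1, rational q₁,…,q_m, states s₁,…,s_m, surjective index map k, target sets T₁,…,T_m), let v^min = Σ_{c=(s,·)∈Comb} min_{σ∈HR} Σ_{i∈ind(c)} qᵢ · Pr^σ_s(◇Tᵢ) and v^max analogously with max. Then for every rational q and every ε ≥ 0: there exist schedulers σ₁,…,σₙ ∈ HR with |Σ_{i=1}^m qᵢ · Pr^{σ_{k(i)}}_{sᵢ}(◇Tᵢ) − q| > ε if and only if v^max > q + ε or v^min < q − ε. -/

import Mathlib

open scoped BigOperators Classical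
open Filter

/-- A finite history: an initial state together with a list of (action, next-state) steps. -/
abbrev Hist (S A : Type*) : Type _ := S × List (A × S)

/-- The last state of a history. -/
def Hist.last {S A : Type*} (π : Hist S A) : S :=
  (π.2.getLast?).elim π.1 Prod.snd

/-- A Markov decision process with finite state space `S` and finite action space `A`:
`P s a s'` is the transition probability, each state has at least one enabled action
(an action whose outgoing probabilities sum to `1`), and the outgoing probabilities
of a non-enabled action sum to `0`. -/
structure MDP (S A : Type*) [Fintype S] [Fintype A] where
  P : S → A → S → ℝ
  nonneg : ∀ s a s', 0 ≤ P s a s'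
  le_one : ∀ s a s', P s a s' ≤ 1
  sum_cases : ∀ s a, (∑ s', P s a s') = 1 ∨ (∑ s', P s a s') = 0
  exists_enabled : ∀ s, ∃ a, (∑ s', P s a s') = 1

namespace MDP

variable {S A : Type*} [Fintype S] [Fintype A]

/-- Action `a` is enabled in state `s`. -/
def enabled (M : MDP S A) (s : S) (a : A) : Prop := (∑ s', M.P s a s') = 1

/-- A state is absorbing if every enabled action loops on it with probability 1. -/
def Absorbing (M : MDP S A) (s : S) : Prop := ∀ a, M.enabled s a → M.P s a s = 1

end MDP

/-- A (history-dependent, randomized) scheduler for `M`: it assigns to every finite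
history a probability distribution over the actions enabled at its last state. -/
structure Scheduler {S A : Type*} [Fintype S] [Fintype A] (M : MDP S A) where
  choice : Hist S A → A → ℝ
  nonneg : ∀ π a, 0 ≤ choice π a
  sum_one : ∀ π, (∑ a, choice π a) = 1
  supp : ∀ π a, ¬ M.enabled (Hist.last π) a → choice π a = 0

namespace Scheduler

variable {S A : Type*} [Fintype S] [Fintype A] {M : MDP S A}

/-- A scheduler is memoryless if its choice only depends on the last state of the history. -/
def Memoryless (σ : Scheduler M) : Prop :=
  ∀ π π' : Hist S A, Hist.last π = Hist.last π' → σ.choice π = σ.choice π'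

/-- A scheduler is deterministic if all its choice probabilities are 0 or 1. -/
def Deterministic (σ : Scheduler M) : Prop :=
  ∀ π a, σ.choice π a = 0 ∨ σ.choice π a = 1

/-- Memoryless deterministic (MD) schedulers. -/
def MD (σ : Scheduler M) : Prop := σ.Memoryless ∧ σ.Deterministic

end Scheduler

/-- Probability of reaching the target set `T` within `n` steps, starting from history `π`,
under scheduler `σ`. -/
noncomputable def reachN {S A : Type*} [Fintype S] [Fintype A] (M : MDP S A)
    (σ : Scheduler M) (T : Set S) : ℕ → Hist S A → ℝ
  | 0, π => if Hist.last π ∈ T then 1 else 0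
  | n + 1, π =>
      if Hist.last π ∈ T then 1
      else ∑ a, σ.choice π a * ∑ s', M.P (Hist.last π) a s' *
        reachN M σ T n (π.1, π.2 ++ [(a, s')])

/-- `Pr M σ s T` is the probability of eventually reaching `T` from state `s` under
scheduler `σ`: the supremum of the step-bounded reachability probabilities. -/
noncomputable def Pr {S A : Type*} [Fintype S] [Fintype A] (M : MDP S A)
    (σ : Scheduler M) (s : S) (T : Set S) : ℝ :=
  ⨆ n : ℕ, reachN M σ T n (s, [])

/-- The set `Comb` of state-scheduler combinations `(sᵢ, k(i))` of a relational
reachability instance. -/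
noncomputable def combSet {S : Type*} [Fintype S] {m n : ℕ}
    (s : Fin m → S) (k : Fin m → Fin n) : Finset (S × Fin n) :=
  Finset.image (fun i => (s i, k i)) Finset.univ

/-- The contribution `Σ_{i ∈ ind(c)} qᵢ · Pr^σ_{c.1}(◇Tᵢ)` of a state-scheduler
combination `c` under a scheduler `σ`. -/
noncomputable def combVal {S A : Type*} [Fintype S] [Fintype A] {m n : ℕ}
    (M : MDP S A) (q : Fin m → ℚ) (s : Fin m → S) (k : Fin m → Fin n)
    (T : Fin m → Set S) (σ : Scheduler M) (c : S × Fin n) : ℝ :=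
  ∑ i ∈ Finset.univ.filter (fun i => (s i, k i) = c), (q i : ℝ) * Pr M σ c.1 (T i)

/-- `v^min`: the sum over all combinations `c` of the infimum over all schedulers of the
contribution of `c`. -/
noncomputable def vMin {S A : Type*} [Fintype S] [Fintype A] {m n : ℕ}
    (M : MDP S A) (q : Fin m → ℚ) (s : Fin m → S) (k : Fin m → Fin n)
    (T : Fin m → Set S) : ℝ :=
  ∑ c ∈ combSet s k, sInf {x : ℝ | ∃ σ : Scheduler M, x = combVal M q s k T σ c}

/-- `v^max`: the sum over all combinations `c` of the supremum over all schedulers of the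
contribution of `c`. -/
noncomputable def vMax {S A : Type*} [Fintype S] [Fintype A] {m n : ℕ}
    (M : MDP S A) (q : Fin m → ℚ) (s : Fin m → S) (k : Fin m → Fin n)
    (T : Fin m → Set S) : ℝ :=
  ∑ c ∈ combSet s k, sSup {x : ℝ | ∃ σ : Scheduler M, x = combVal M q s k T σ c}

/-- The achievable value set
`A = {Σ_{i} qᵢ · Pr^{σ_{k(i)}}_{sᵢ}(◇Tᵢ) : σ₁,…,σₙ ∈ HR}`. -/
noncomputable def achSet {S A : Type*} [Fintype S] [Fintype A] {m n : ℕ}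
    (M : MDP S A) (q : Fin m → ℚ) (s : Fin m → S) (k : Fin m → Fin n)
    (T : Fin m → Set S) : Set ℝ :=
  {x : ℝ | ∃ σ : Fin n → Scheduler M,
    x = ∑ i, (q i : ℝ) * Pr M (σ (k i)) (s i) (T i)}

section Aux

variable {S A : Type*} [Fintype S] [Fintype A]

/-- A default scheduler: deterministically pick some enabled action. -/
noncomputable def defaultSched (M : MDP S A) : Scheduler M where
  choice π a := if a = Classical.choose (M.exists_enabled (Hist.last π)) then 1 else 0
  nonneg π a := by split <;> norm_num
  sum_one π := by simp
  supp π a h := by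
    rw [if_neg]
    rintro rfl
    exact h (Classical.choose_spec (M.exists_enabled (Hist.last π)))

instance (M : MDP S A) : Nonempty (Scheduler M) := ⟨defaultSched M⟩

/-- Glue a family of schedulers indexed by the initial state. -/
noncomputable def glueSched (M : MDP S A) (τ : S → Scheduler M) : Scheduler M where
  choice π := (τ π.1).choice π
  nonneg π := (τ π.1).nonneg π
  sum_one π := (τ π.1).sum_one π
  supp π := (τ π.1).supp π

lemma reachN_nonneg (M : MDP S A) (σ : Scheduler M) (T : Set S) :
    ∀ n π, 0 ≤ reachN M σ T n π
  | 0, π => by unfold reachN; split <;> norm_num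
  | n + 1, π => by
      unfold reachN
      split
      · norm_num
      · refine Finset.sum_nonneg fun a _ => mul_nonneg (σ.nonneg π a) ?_
        exact Finset.sum_nonneg fun s' _ =>
          mul_nonneg (M.nonneg _ _ _) (reachN_nonneg M σ T n _)

lemma reachN_le_one (M : MDP S A) (σ : Scheduler M) (T : Set S) :
    ∀ n π, reachN M σ T n π ≤ 1
  | 0, π => by unfold reachN; split <;> norm_num
  | n + 1, π => by
      unfold reachN
      split
      · exact le_refl 1
      · calc ∑ a, σ.choice π a * ∑ s', M.P (Hist.last π) a s' *
              reachN M σ T n (π.1, π.2 ++ [(a, s')])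
            ≤ ∑ a, σ.choice π a * 1 := by
              refine Finset.sum_le_sum fun a _ => mul_le_mul_of_nonneg_left ?_ (σ.nonneg π a)
              calc (∑ s', M.P (Hist.last π) a s' * reachN M σ T n (π.1, π.2 ++ [(a, s')]))
                  ≤ ∑ s', M.P (Hist.last π) a s' := by
                    refine Finset.sum_le_sum fun s' _ => ?_
                    nth_rewrite 2 [← mul_one (M.P (Hist.last π) a s')]
                    exact mul_le_mul_of_nonneg_left (reachN_le_one M σ T n _) (M.nonneg _ _ _)
                _ ≤ 1 := by rcases M.sum_cases (Hist.last π) a with h | h <;> rw [h] <;> norm_num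
          _ = 1 := by simp [σ.sum_one π]

lemma Pr_bddAbove (M : MDP S A) (σ : Scheduler M) (st : S) (T : Set S) :
    BddAbove (Set.range fun n => reachN M σ T n (st, [])) :=
  ⟨1, by rintro x ⟨n, rfl⟩; exact reachN_le_one M σ T n _⟩

lemma Pr_nonneg (M : MDP S A) (σ : Scheduler M) (st : S) (T : Set S) :
    0 ≤ Pr M σ st T :=
  le_trans (reachN_nonneg M σ T 0 _) (le_ciSup (Pr_bddAbove M σ st T) 0)

lemma Pr_le_one (M : MDP S A) (σ : Scheduler M) (st : S) (T : Set S) :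
    Pr M σ st T ≤ 1 :=
  ciSup_le fun n => reachN_le_one M σ T n _

lemma reachN_glue (M : MDP S A) (τ : S → Scheduler M) (T : Set S) :
    ∀ n (π : Hist S A), reachN M (glueSched M τ) T n π = reachN M (τ π.1) T n π
  | 0, π => rfl
  | n + 1, π => by
      unfold reachN
      split
      · rfl
      · refine Finset.sum_congr rfl fun a _ => ?_
        refine congrArg _ (Finset.sum_congr rfl fun s' _ => ?_)
        exact congrArg _ (reachN_glue M τ T n (π.1, π.2 ++ [(a, s')]))

lemma Pr_glue (M : MDP S A) (τ : S → Scheduler M) (st : S) (T : Set S) :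
    Pr M (glueSched M τ) st T = Pr M (τ st) st T := by
  unfold Pr
  congr 1
  funext n
  exact reachN_glue M τ T n (st, [])

variable {m n : ℕ} (M : MDP S A) (q : Fin m → ℚ) (s : Fin m → S) (k : Fin m → Fin n)
  (T : Fin m → Set S)

lemma combVal_abs_le (σ : Scheduler M) (c : S × Fin n) :
    |combVal M q s k T σ c| ≤ ∑ i, |(q i : ℝ)| := by
  calc |combVal M q s k T σ c|
      ≤ ∑ i ∈ Finset.univ.filter (fun i => (s i, k i) = c), |(q i : ℝ) * Pr M σ c.1 (T i)| :=
        Finset.abs_sum_le_sum_abs _ _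
    _ ≤ ∑ i ∈ Finset.univ.filter (fun i => (s i, k i) = c), |(q i : ℝ)| := by
        refine Finset.sum_le_sum fun i _ => ?_
        rw [abs_mul]
        nth_rewrite 2 [← mul_one |(q i : ℝ)|]
        refine mul_le_mul_of_nonneg_left ?_ (abs_nonneg _)
        rw [abs_of_nonneg (Pr_nonneg M σ c.1 (T i))]
        exact Pr_le_one M σ c.1 (T i)
    _ ≤ ∑ i, |(q i : ℝ)| := Finset.sum_le_sum_of_subset_of_nonneg (Finset.filter_subset _ _)
        (fun i _ _ => abs_nonneg _)

lemma combValSet_nonempty (c : S × Fin n) :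
    {x : ℝ | ∃ σ : Scheduler M, x = combVal M q s k T σ c}.Nonempty :=
  ⟨combVal M q s k T (defaultSched M) c, defaultSched M, rfl⟩

lemma combValSet_bddAbove (c : S × Fin n) :
    BddAbove {x : ℝ | ∃ σ : Scheduler M, x = combVal M q s k T σ c} :=
  ⟨∑ i, |(q i : ℝ)|, by rintro x ⟨σ, rfl⟩; exact le_of_abs_le (combVal_abs_le M q s k T σ c)⟩

lemma combValSet_bddBelow (c : S × Fin n) :
    BddBelow {x : ℝ | ∃ σ : Scheduler M, x = combVal M q s k T σ c} :=
  ⟨-∑ i, |(q i : ℝ)|, by rintro x ⟨σ, rfl⟩; exact neg_le_of_abs_le (combVal_abs_le M q s k T σ c)⟩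

lemma sum_eq_sum_combVal (σ : Fin n → Scheduler M) :
    ∑ i, (q i : ℝ) * Pr M (σ (k i)) (s i) (T i)
      = ∑ c ∈ combSet s k, combVal M q s k T (σ c.2) c := by
  have h : ∀ c ∈ combSet s k, combVal M q s k T (σ c.2) c
      = ∑ i ∈ Finset.univ.filter (fun i => (s i, k i) = c),
          (q i : ℝ) * Pr M (σ (k i)) (s i) (T i) := by
    intro c _
    refine Finset.sum_congr rfl fun i hi => ?_
    have h := (Finset.mem_filter.mp hi).2
    subst h
    rfl
  rw [Finset.sum_congr rfl h]
  exact (Finset.sum_fiberwise_of_maps_to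
    (fun i _ => Finset.mem_image_of_mem _ (Finset.mem_univ i)) _).symm

end Aux


/-- For every rational `q₀` and every `ε ≥ 0`, there are schedulers
`σ₁,…,σₙ` with `|Σᵢ qᵢ · Pr^{σ_{k(i)}}_{sᵢ}(◇Tᵢ) − q₀| > ε` if and only if
`v^max > q₀ + ε` or `v^min < q₀ − ε`. -/
theorem disequality_iff_outside_interval
    {S A : Type*} [Fintype S] [Fintype A] [Nonempty S] [Nonempty A]
    (M : MDP S A) {m n : ℕ} (hn : 1 ≤ n) (hmn : n ≤ m)
    (q : Fin m → ℚ) (s : Fin m → S) (k : Fin m → Fin n)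
    (hk : Function.Surjective k) (T : Fin m → Set S)
    (q₀ : ℚ) (ε : ℝ) (hε : 0 ≤ ε) :
    (∃ σ : Fin n → Scheduler M,
        |(∑ i, (q i : ℝ) * Pr M (σ (k i)) (s i) (T i)) - (q₀ : ℝ)| > ε) ↔
      (vMax M q s k T > (q₀ : ℝ) + ε ∨ vMin M q s k T < (q₀ : ℝ) - ε) := by
  have hmpos : 0 < m := lt_of_lt_of_le hn hmn
  have hcomb : (combSet s k).Nonempty := by
    haveI : Nonempty (Fin m) := ⟨⟨0, hmpos⟩⟩
    exact Finset.Nonempty.image Finset.univ_nonempty _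
  constructor
  · rintro ⟨σ, hσ⟩
    set v := ∑ i, (q i : ℝ) * Pr M (σ (k i)) (s i) (T i) with hv
    have hveq := sum_eq_sum_combVal M q s k T σ
    have hle : v ≤ vMax M q s k T := by
      rw [hv, hveq]
      exact Finset.sum_le_sum fun c _ =>
        le_csSup (combValSet_bddAbove M q s k T c) ⟨σ c.2, rfl⟩
    have hge : vMin M q s k T ≤ v := by
      rw [hv, hveq]
      exact Finset.sum_le_sum fun c _ =>
        csInf_le (combValSet_bddBelow M q s k T c) ⟨σ c.2, rfl⟩
    rcases lt_abs.mp hσ with h | h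
    · exact Or.inl (by linarith)
    · exact Or.inr (by linarith)
  · intro h
    set N : ℝ := ((combSet s k).card : ℝ) with hN
    have hNpos : (0 : ℝ) < N := by
      rw [hN]
      exact_mod_cast Finset.card_pos.mpr hcomb
    rcases h with h | h
    · set δ : ℝ := (vMax M q s k T - ((q₀ : ℝ) + ε)) / N with hδdef
      have hδ : 0 < δ := div_pos (by linarith) hNpos
      have hch : ∀ c : S × Fin n, ∃ σc : Scheduler M, c ∈ combSet s k →
          sSup {x : ℝ | ∃ σ : Scheduler M, x = combVal M q s k T σ c} - δ
            < combVal M q s k T σc c := by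
        intro c
        by_cases hc : c ∈ combSet s k
        · obtain ⟨x, ⟨σc, rfl⟩, hx⟩ := exists_lt_of_lt_csSup (combValSet_nonempty M q s k T c)
            (sub_lt_self _ hδ)
          exact ⟨σc, fun _ => hx⟩
        · exact ⟨defaultSched M, fun hc' => absurd hc' hc⟩
      choose f hf using hch
      refine ⟨fun j => glueSched M (fun st => f (st, j)), ?_⟩
      set σ' : Fin n → Scheduler M := fun j => glueSched M (fun st => f (st, j)) with hσ'
      have hval : ∀ c ∈ combSet s k,
          combVal M q s k T (σ' c.2) c = combVal M q s k T (f c) c := by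
        intro c _
        refine Finset.sum_congr rfl fun i _ => ?_
        refine congrArg _ ?_
        rw [hσ', Pr_glue]
      have hgt : (q₀ : ℝ) + ε < ∑ i, (q i : ℝ) * Pr M (σ' (k i)) (s i) (T i) := by
        rw [sum_eq_sum_combVal M q s k T σ', Finset.sum_congr rfl hval]
        have h1 : ∑ c ∈ combSet s k,
            (sSup {x : ℝ | ∃ σ : Scheduler M, x = combVal M q s k T σ c} - δ)
              < ∑ c ∈ combSet s k, combVal M q s k T (f c) c :=
          Finset.sum_lt_sum_of_nonempty hcomb fun c hc => hf c hc
        have h2 : ∑ c ∈ combSet s k,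
            (sSup {x : ℝ | ∃ σ : Scheduler M, x = combVal M q s k T σ c} - δ)
              = vMax M q s k T - N * δ := by
          rw [Finset.sum_sub_distrib, Finset.sum_const, nsmul_eq_mul]
          rfl
        have h3 : N * δ = vMax M q s k T - ((q₀ : ℝ) + ε) := by
          rw [hδdef, mul_div_cancel₀ _ (ne_of_gt hNpos)]
        rw [h2, h3] at h1
        linarith
      have : (0:ℝ) ≤ ∑ i, (q i : ℝ) * Pr M (σ' (k i)) (s i) (T i) - (q₀ : ℝ) := by linarith
      rw [gt_iff_lt, lt_abs]
      exact Or.inl (by linarith)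
    · set δ : ℝ := (((q₀ : ℝ) - ε) - vMin M q s k T) / N with hδdef
      have hδ : 0 < δ := div_pos (by linarith) hNpos
      have hch : ∀ c : S × Fin n, ∃ σc : Scheduler M, c ∈ combSet s k →
          combVal M q s k T σc c
            < sInf {x : ℝ | ∃ σ : Scheduler M, x = combVal M q s k T σ c} + δ := by
        intro c
        by_cases hc : c ∈ combSet s k
        · obtain ⟨x, ⟨σc, rfl⟩, hx⟩ := exists_lt_of_csInf_lt (combValSet_nonempty M q s k T c)
            (lt_add_of_pos_right _ hδ)
          exact ⟨σc, fun _ => hx⟩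
        · exact ⟨defaultSched M, fun hc' => absurd hc' hc⟩
      choose f hf using hch
      refine ⟨fun j => glueSched M (fun st => f (st, j)), ?_⟩
      set σ' : Fin n → Scheduler M := fun j => glueSched M (fun st => f (st, j)) with hσ'
      have hval : ∀ c ∈ combSet s k,
          combVal M q s k T (σ' c.2) c = combVal M q s k T (f c) c := by
        intro c _
        refine Finset.sum_congr rfl fun i _ => ?_
        refine congrArg _ ?_
        rw [hσ', Pr_glue]
      have hlt : ∑ i, (q i : ℝ) * Pr M (σ' (k i)) (s i) (T i) < (q₀ : ℝ) - ε := by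
        rw [sum_eq_sum_combVal M q s k T σ', Finset.sum_congr rfl hval]
        have h1 : ∑ c ∈ combSet s k, combVal M q s k T (f c) c
            < ∑ c ∈ combSet s k,
              (sInf {x : ℝ | ∃ σ : Scheduler M, x = combVal M q s k T σ c} + δ) :=
          Finset.sum_lt_sum_of_nonempty hcomb fun c hc => hf c hc
        have h2 : ∑ c ∈ combSet s k,
            (sInf {x : ℝ | ∃ σ : Scheduler M, x = combVal M q s k T σ c} + δ)
              = vMin M q s k T + N * δ := by
          rw [Finset.sum_add_distrib, Finset.sum_const, nsmul_eq_mul]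
          rfl
        have h3 : N * δ = ((q₀ : ℝ) - ε) - vMin M q s k T := by
          rw [hδdef, mul_div_cancel₀ _ (ne_of_gt hNpos)]
        rw [h2, h3] at h1
        linarith
      rw [gt_iff_lt, lt_abs]
      exact Or.inr (by linarith)
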